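/- For every modulus function f and lacunary sequence θ, AC_θ ⊆ AC_θ(f): if there exists an integer n such that (1/h_r) Σ_{m∈I_r} |x_m − x_{⟨m,n⟩}| → 0 as r → ∞, then (1/h_r) Σ_{m∈I_r} f(|x_m − x_{⟨m,n⟩}|) → 0 as r → ∞. -/
import Mathlib


open Filter Finset

/-- Membership in the lacunary arithmetic convergence space `AC_θ`,
with lacunary sequence given by `k` (blocks `I_r = (k r, k (r+1)]`,
`h_r = k (r+1) - k r`) and witness integer `n`. -/
def ACtheta (k : ℕ → ℕ) (n : ℕ) (x : ℕ → ℝ) : Prop :=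
  Tendsto (fun r => (1 / ((k (r + 1) - k r : ℕ) : ℝ)) *
    ∑ m ∈ Finset.Ioc (k r) (k (r + 1)), |x m - x (Nat.gcd m n)|) atTop (nhds 0)

/-- Membership in the strongly Cesàro arithmetic convergence space `AC_{σ₁}`
with witness integer `n`. -/
def ACsigma (n : ℕ) (x : ℕ → ℝ) : Prop :=
  Tendsto (fun t : ℕ => (1 / (t : ℝ)) *
    ∑ m ∈ Finset.Icc 1 t, |x m - x (Nat.gcd m n)|) atTop (nhds 0)
/-- A modulus function `f : [0,∞) → [0,∞)`. -/
structure IsModulus (f : ℝ → ℝ) : Prop where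
  nonneg : ∀ x, 0 ≤ x → 0 ≤ f x
  eq_zero_iff : ∀ x, 0 ≤ x → (f x = 0 ↔ x = 0)
  subadd : ∀ x y, 0 ≤ x → 0 ≤ y → f (x + y) ≤ f x + f y
  mono : ∀ x y, 0 ≤ x → x ≤ y → f x ≤ f y
  right_cont : ContinuousWithinAt f (Set.Ici 0) 0

/-- Membership in `AC_θ(f)` with witness integer `n`. -/
def ACthetaF (f : ℝ → ℝ) (k : ℕ → ℕ) (n : ℕ) (x : ℕ → ℝ) : Prop :=
  Filter.Tendsto (fun r => (1 / ((k (r + 1) - k r : ℕ) : ℝ)) *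
    ∑ m ∈ Finset.Ioc (k r) (k (r + 1)), f |x m - x (Nat.gcd m n)|)
    Filter.atTop (nhds 0)

lemma modulus_nat (f : ℝ → ℝ) (hf : IsModulus f) : ∀ N : ℕ, f N ≤ N * f 1 := by
  intro N
  induction N with
  | zero => simp [(hf.eq_zero_iff 0 le_rfl).mpr rfl]
  | succ m ih =>
    have h := hf.subadd m 1 (by positivity) zero_le_one
    push_cast
    calc f ((m : ℝ) + 1) ≤ f m + f 1 := h
    _ ≤ m * f 1 + f 1 := by linarith
    _ = ((m : ℝ) + 1) * f 1 := by ring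

lemma modulus_bound (f : ℝ → ℝ) (hf : IsModulus f) {δ x : ℝ}
    (hδ : 0 < δ) (hδ1 : δ ≤ 1) (hx : 0 ≤ x) :
    f x ≤ f δ + (2 * f 1 / δ) * x := by
  have hf1 : 0 ≤ f 1 := hf.nonneg 1 zero_le_one
  rcases le_or_gt x δ with h | h
  · have h0 : 0 ≤ (2 * f 1 / δ) * x := by positivity
    linarith [hf.mono x δ hx h]
  · have hfδ : 0 ≤ f δ := hf.nonneg δ hδ.le
    have h1 : f x ≤ f (⌈x⌉₊ : ℝ) := hf.mono x _ hx (Nat.le_ceil x)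
    have h2 : f (⌈x⌉₊ : ℝ) ≤ (⌈x⌉₊ : ℝ) * f 1 := modulus_nat f hf _
    have h3 : (⌈x⌉₊ : ℝ) ≤ x + 1 := (Nat.ceil_lt_add_one hx).le
    have h4 : (x + 1) * f 1 ≤ (2 * f 1 / δ) * x := by
      rw [div_mul_eq_mul_div, le_div_iff₀ hδ]
      nlinarith [mul_nonneg hf1 (by nlinarith : (0:ℝ) ≤ 2 * x - δ * x - δ)]
    nlinarith [mul_le_mul_of_nonneg_right h3 hf1]

/-- `AC_θ ⊆ AC_θ(f)` for any modulus `f`. -/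
theorem ACtheta_subset_ACthetaF (f : ℝ → ℝ) (hf : IsModulus f)
    (k : ℕ → ℕ) (hk : StrictMono k)
    (hh : Tendsto (fun r => (k (r + 1) - k r : ℕ)) atTop atTop)
    (n : ℕ) (x : ℕ → ℝ) (hx : ACtheta k n x) :
    ACthetaF f k n x := by
  unfold ACtheta at hx
  unfold ACthetaF
  have hf1 : 0 ≤ f 1 := hf.nonneg 1 zero_le_one
  have hf0 : f 0 = 0 := (hf.eq_zero_iff 0 le_rfl).mpr rfl
  rw [Metric.tendsto_atTop] at hx ⊢
  intro ε hε
  -- choose δ from right continuity of f at 0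
  obtain ⟨δ0, hδ0, hδball⟩ :=
    Metric.continuousWithinAt_iff.mp hf.right_cont (ε / 2) (by linarith)
  set δ : ℝ := min (δ0 / 2) 1 with hδdef
  have hδpos : 0 < δ := lt_min (by linarith) one_pos
  have hδle1 : δ ≤ 1 := min_le_right _ _
  have hfδ : f δ < ε / 2 := by
    have hd : dist δ 0 < δ0 := by
      rw [Real.dist_eq, sub_zero, abs_of_nonneg hδpos.le]
      calc δ ≤ δ0 / 2 := min_le_left _ _
      _ < δ0 := by linarith
    have := hδball (Set.mem_Ici.mpr hδpos.le) hd
    rwa [hf0, Real.dist_eq, sub_zero, abs_of_nonneg (hf.nonneg δ hδpos.le)] at this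
  set C : ℝ := 2 * f 1 / δ with hCdef
  have hC : 0 ≤ C := by positivity
  obtain ⟨N1, hN1⟩ := hx (ε / (2 * (C + 1))) (by positivity)
  have hev : ∀ᶠ r in atTop, 1 ≤ (k (r + 1) - k r : ℕ) := hh.eventually_ge_atTop 1
  rw [Filter.eventually_atTop] at hev
  obtain ⟨N2, hN2⟩ := hev
  refine ⟨max N1 N2, fun r hr => ?_⟩
  have hr1 : N1 ≤ r := le_trans (le_max_left _ _) hr
  have hr2 : N2 ≤ r := le_trans (le_max_right _ _) hr
  have hhr : 1 ≤ (k (r + 1) - k r : ℕ) := hN2 r hr2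
  set h : ℝ := ((k (r + 1) - k r : ℕ) : ℝ) with hhdef
  have hhpos : 0 < h := by
    have h0 : (0:ℕ) < k (r + 1) - k r := hhr
    rw [hhdef]
    exact_mod_cast h0
  have hcard : ((Finset.Ioc (k r) (k (r + 1))).card : ℝ) = h := by
    rw [Nat.card_Ioc]
  set T : ℝ := ∑ m ∈ Finset.Ioc (k r) (k (r + 1)), |x m - x (Nat.gcd m n)| with hTdef
  set S : ℝ := ∑ m ∈ Finset.Ioc (k r) (k (r + 1)), f |x m - x (Nat.gcd m n)| with hSdef
  have hT0 : 0 ≤ T := Finset.sum_nonneg fun m _ => abs_nonneg _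
  have hS0 : 0 ≤ S := Finset.sum_nonneg fun m _ => hf.nonneg _ (abs_nonneg _)
  have hSle : S ≤ ((Finset.Ioc (k r) (k (r + 1))).card : ℝ) * f δ + C * T := by
    rw [hSdef, hTdef, Finset.mul_sum]
    calc ∑ m ∈ Finset.Ioc (k r) (k (r + 1)), f |x m - x (Nat.gcd m n)|
        ≤ ∑ m ∈ Finset.Ioc (k r) (k (r + 1)), (f δ + C * |x m - x (Nat.gcd m n)|) :=
          Finset.sum_le_sum fun m _ => modulus_bound f hf hδpos hδle1 (abs_nonneg _)
      _ = ((Finset.Ioc (k r) (k (r + 1))).card : ℝ) * f δ +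
            ∑ m ∈ Finset.Ioc (k r) (k (r + 1)), C * |x m - x (Nat.gcd m n)| := by
          rw [Finset.sum_add_distrib, Finset.sum_const, nsmul_eq_mul]
  have hTsmall : (1 / h) * T < ε / (2 * (C + 1)) := by
    have := hN1 r hr1
    rwa [Real.dist_eq, sub_zero, abs_of_nonneg (by positivity)] at this
  rw [Real.dist_eq, sub_zero, abs_of_nonneg (by positivity)]
  have key : (1 / h) * S ≤ f δ + C * ((1 / h) * T) := by
    rw [hcard] at hSle
    have := mul_le_mul_of_nonneg_left hSle (by positivity : (0:ℝ) ≤ 1 / h)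
    calc (1 / h) * S ≤ (1 / h) * (h * f δ + C * T) := this
      _ = (1 / h * h) * f δ + C * ((1 / h) * T) := by ring
      _ = f δ + C * ((1 / h) * T) := by rw [one_div_mul_cancel hhpos.ne', one_mul]
  have hC2 : C * ((1 / h) * T) < ε / 2 := by
    have h1 : C * ((1 / h) * T) ≤ C * (ε / (2 * (C + 1))) :=
      mul_le_mul_of_nonneg_left hTsmall.le hC
    have h2 : C * (ε / (2 * (C + 1))) < ε / 2 := by
      rw [mul_div_assoc', div_lt_div_iff₀ (by positivity) (by norm_num)]
      nlinarith
    linarith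
  linarith
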